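/- Let n be such that an n×n Hadamard matrix H exists, with Hᵀ = [𝟙 | Lᵀ]. Then i ↦ (2n)^{−1/2} L e_i is a unit-distance representation of K_n in ℝ^{n−1}, and for any diagonal A ⪰ 0 of size n−1 and any p ∈ [1,∞], this Hadamard representation is an optimal solution of 𝓔_p(K_n;A); in particular its objective value is (tr(A)/(2n))·‖𝟙‖_p. -/

import Mathlib

open scoped RealInnerProductSpace

def IsUnitDistRep {V : Type*} (G : SimpleGraph V) {d : ℕ}
    (u : V → EuclideanSpace ℝ (Fin d)) : Prop :=
  ∀ i j, G.Adj i j → ‖u i - u j‖ = 1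

def IsHypersphereRep {V : Type*} (G : SimpleGraph V) {d : ℕ}
    (u : V → EuclideanSpace ℝ (Fin d)) (t : ℝ) : Prop :=
  IsUnitDistRep G u ∧ ∀ i, ‖u i‖ ^ 2 = t

noncomputable def hypersphereNumber {V : Type*} (G : SimpleGraph V) : ℝ :=
  sInf {t | ∃ (d : ℕ) (u : V → EuclideanSpace ℝ (Fin d)), IsHypersphereRep G u t}

open Matrix

open scoped ENNReal

/-- The objective `‖(uᵢᵀ A uᵢ)_{i∈V}‖_p`. -/
noncomputable def objP {V : Type*} [Fintype V] (p : ℝ≥0∞) [Fact (1 ≤ p)] {d : ℕ}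
    (A : Matrix (Fin d) (Fin d) ℝ) (u : V → EuclideanSpace ℝ (Fin d)) : ℝ :=
  ‖(WithLp.equiv p (∀ _ : V, ℝ)).symm
    (fun i => dotProduct (WithLp.equiv 2 (Fin d → ℝ) (u i))
      (A *ᵥ WithLp.equiv 2 (Fin d → ℝ) (u i)))‖

/-- The Hadamard representation `i ↦ (2n)^{−1/2} L eᵢ` of `Kₙ`, where `Hᵀ = [𝟙 | Lᵀ]`,
i.e. `L` consists of the rows of `H` other than the all-ones first row. -/
noncomputable def hadamardRep (m : ℕ) (H : Matrix (Fin (m + 1)) (Fin (m + 1)) ℝ) :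
    Fin (m + 1) → EuclideanSpace ℝ (Fin m) :=
  fun i => (WithLp.equiv 2 (Fin m → ℝ)).symm
    (fun k => (Real.sqrt (2 * (m + 1)))⁻¹ * H k.succ i)

open Finset

section Aux

lemma hadAux_centered_le {n : ℕ} (x : Fin n → ℝ) (c : ℝ) (hc : c = (∑ j, x j) / n) :
    ∑ i, (x i - c) ^ 2 ≤ ∑ i, (x i) ^ 2 := by
  have hexp : ∑ i, (x i - c) ^ 2 = ∑ i, (x i) ^ 2 - 2 * c * (∑ i, x i) + n * c ^ 2 := by
    have : ∀ i : Fin n, (x i - c) ^ 2 = (x i) ^ 2 - 2 * c * x i + c ^ 2 := fun i => by ring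
    rw [Finset.sum_congr rfl fun i _ => this i]
    rw [Finset.sum_add_distrib, Finset.sum_sub_distrib, ← Finset.mul_sum, Finset.sum_const]
    simp [card_univ]
  rcases Nat.eq_zero_or_pos n with h | h
  · subst h; simp
  · have hn : (0:ℝ) < n := by exact_mod_cast h
    set s := ∑ i, x i with hs
    rw [hexp, hc]
    have h1 : (n:ℝ) * ((s / n) ^ 2) = s ^ 2 / n := by field_simp
    have h2 : 2 * (s / n) * s = 2 * (s ^ 2 / n) := by ring
    have h3 : 0 ≤ s ^ 2 / n := div_nonneg (sq_nonneg s) hn.le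
    rw [h1, h2]; linarith

lemma hadAux_covariance_diag {m : ℕ} (u : Fin (m+1) → EuclideanSpace ℝ (Fin m))
    (hu : ∀ i j : Fin (m+1), i ≠ j → ∑ k, (u i k - u j k) ^ 2 = 1) (k₀ : Fin m) :
    ∑ i, (u i k₀ - (∑ j, u j k₀) / (m+1)) ^ 2 = 1 / 2 := by
  have hN : (0:ℝ) < (m:ℝ) + 1 := by positivity
  set W : Matrix (Fin m) (Fin (m+1)) ℝ :=
    Matrix.of (fun k i => u i k - (∑ j, u j k) / (m+1)) with hWdef
  have hW0 : ∀ k, ∑ i, W k i = 0 := by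
    intro k
    simp only [hWdef, Matrix.of_apply, Finset.sum_sub_distrib, Finset.sum_const,
      card_univ, Fintype.card_fin, nsmul_eq_mul]
    push_cast
    field_simp
    ring
  have hWd : ∀ i j, i ≠ j → ∑ k, (W k i - W k j) ^ 2 = 1 := by
    intro i j hij
    have : ∀ k : Fin m, (W k i - W k j) ^ 2 = (u i k - u j k) ^ 2 := by
      intro k; simp only [hWdef, Matrix.of_apply]; ring
    rw [Finset.sum_congr rfl fun k _ => this k]; exact hu i j hij
  set B : Matrix (Fin (m+1)) (Fin (m+1)) ℝ := Wᵀ * W with hBdef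
  have hBapp : ∀ i j, B i j = ∑ k, W k i * W k j := by
    intro i j; simp [hBdef, Matrix.mul_apply]
  have hrow : ∀ i, ∑ j, B i j = 0 := by
    intro i
    have : ∑ j, B i j = ∑ k, W k i * ∑ j, W k j := by
      simp_rw [hBapp, Finset.mul_sum]; exact Finset.sum_comm
    rw [this]; simp [hW0]
  have hpair : ∀ i j, i ≠ j → B i i + B j j - 2 * B i j = 1 := by
    intro i j hij
    have hexp : ∀ k : Fin m, (W k i - W k j) ^ 2
        = W k i * W k i - 2 * (W k i * W k j) + W k j * W k j := fun k => by ring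
    have := hWd i j hij
    rw [Finset.sum_congr rfl fun k _ => hexp k, Finset.sum_add_distrib,
      Finset.sum_sub_distrib, ← Finset.mul_sum] at this
    rw [hBapp, hBapp, hBapp]; linarith
  have hkey : ∀ i, ((m:ℝ)+1) * B i i + (∑ a, B a a) = m := by
    intro i
    have h1 : ∑ j, (B i i + B j j - 2 * B i j) = ((m:ℝ)+1) * B i i + (∑ a, B a a) := by
      rw [Finset.sum_sub_distrib, Finset.sum_add_distrib, ← Finset.mul_sum, hrow]
      simp [card_univ, mul_comm]
    have h2 : ∑ j, (B i i + B j j - 2 * B i j) = m := by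
      rw [← Finset.sum_erase_add _ _ (Finset.mem_univ i)]
      have : ∀ j ∈ Finset.univ.erase i, B i i + B j j - 2 * B i j = 1 := by
        intro j hj
        exact hpair i j (Finset.ne_of_mem_erase hj).symm
      rw [Finset.sum_congr rfl this, Finset.sum_const, Finset.card_erase_of_mem (Finset.mem_univ i)]
      simp [card_univ]; ring
    linarith
  have htr : ∑ a, B a a = (m:ℝ) / 2 := by
    have := Finset.sum_congr rfl (fun i (_ : i ∈ (Finset.univ : Finset (Fin (m+1)))) => hkey i)
    rw [Finset.sum_add_distrib, Finset.sum_const, ← Finset.mul_sum, Finset.sum_const] at this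
    simp only [card_univ, Fintype.card_fin, nsmul_eq_mul] at this
    push_cast at this
    nlinarith [this]
  have hBdiag : ∀ i, B i i = (m:ℝ) / (2 * ((m:ℝ)+1)) := by
    intro i
    have := hkey i
    rw [htr] at this
    field_simp at this ⊢
    linarith
  have hBoff : ∀ i j, i ≠ j → B i j = -1 / (2 * ((m:ℝ)+1)) := by
    intro i j hij
    have hp := hpair i j hij
    rw [hBdiag i, hBdiag j] at hp
    field_simp at hp ⊢
    linarith
  -- projection argument
  set J : Matrix (Fin (m+1)) (Fin (m+1)) ℝ := Matrix.of (fun _ _ => 1) with hJdef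
  have hBmat : Wᵀ * W = (1/2 : ℝ) • (1 : Matrix (Fin (m+1)) (Fin (m+1)) ℝ)
      - (1 / (2*((m:ℝ)+1))) • J := by
    ext i j
    rcases eq_or_ne i j with rfl | hij
    · simp [show B i i = _ from hBdiag i, hBdef, Matrix.one_apply, hJdef] at *
      rw [hBdiag i]
      field_simp
      try ring
      try tauto
    · have := hBoff i j hij
      rw [hBdef] at this
      simp [this, Matrix.one_apply_ne hij, hJdef]
      field_simp
  have hWJ : W * J = 0 := by
    ext k j; simp [Matrix.mul_apply, hJdef, hW0 k]
  set C : Matrix (Fin m) (Fin m) ℝ := W * Wᵀ with hCdef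
  have hCC : C * C = (1/2 : ℝ) • C := by
    have h1 : C * C = W * (Wᵀ * W) * Wᵀ := by
      rw [hCdef]; rw [Matrix.mul_assoc, Matrix.mul_assoc, Matrix.mul_assoc]
    rw [h1, hBmat, Matrix.mul_sub, Matrix.sub_mul, Matrix.mul_smul, Matrix.mul_smul,
      Matrix.smul_mul, Matrix.smul_mul, Matrix.mul_one, hWJ, Matrix.zero_mul, smul_zero,
      sub_zero, hCdef]
  have hCsym : Cᵀ = C := by rw [hCdef, Matrix.transpose_mul, Matrix.transpose_transpose]
  have htrC : ∑ k, C k k = (m:ℝ)/2 := by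
    have h : C.trace = (Wᵀ * W).trace := Matrix.trace_mul_comm W Wᵀ
    have h2 : (Wᵀ * W).trace = ∑ i, (Wᵀ * W) i i := rfl
    have h3 : C.trace = ∑ k, C k k := rfl
    rw [h3] at h
    have h4 : ∀ i, (Wᵀ * W) i i = (m:ℝ) / (2 * ((m:ℝ)+1)) := by
      intro i; rw [← hBdef]; exact hBdiag i
    rw [h, h2, Finset.sum_congr rfl fun i _ => h4 i, Finset.sum_const]
    simp only [card_univ, Fintype.card_fin, nsmul_eq_mul]
    push_cast
    field_simp
  set Q : Matrix (Fin m) (Fin m) ℝ := 1 - (2:ℝ) • C with hQdef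
  have hQ2 : Q * Q = Q := by
    rw [hQdef]
    simp only [Matrix.sub_mul, Matrix.mul_sub, Matrix.one_mul, Matrix.mul_one,
      Matrix.smul_mul, Matrix.mul_smul, hCC]
    module
  have hQsym : Qᵀ = Q := by
    rw [hQdef, Matrix.transpose_sub, Matrix.transpose_one, Matrix.transpose_smul, hCsym]
  have hQdnn : ∀ k, 0 ≤ Q k k := by
    intro k
    have : Q k k = ∑ a, Q k a * Q k a := by
      conv_lhs => rw [← hQ2]
      rw [Matrix.mul_apply]
      exact Finset.sum_congr rfl fun a _ => by
        rw [show Q a k = Qᵀ k a from rfl, hQsym]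
    rw [this]
    exact Finset.sum_nonneg fun a _ => mul_self_nonneg _
  have htrQ : ∑ k, Q k k = 0 := by
    have : ∀ k : Fin m, Q k k = 1 - 2 * C k k := by
      intro k; simp [hQdef, Matrix.one_apply]
    rw [Finset.sum_congr rfl fun k _ => this k, Finset.sum_sub_distrib, ← Finset.mul_sum, htrC,
      Finset.sum_const]
    simp [card_univ]; ring
  have hQ0 : Q k₀ k₀ = 0 := by
    have := (Finset.sum_eq_zero_iff_of_nonneg (fun k _ => hQdnn k)).mp htrQ
    exact this k₀ (Finset.mem_univ _)
  have hC0 : C k₀ k₀ = 1/2 := by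
    have : Q k₀ k₀ = 1 - 2 * C k₀ k₀ := by simp [hQdef, Matrix.one_apply]
    rw [hQ0] at this; linarith
  have hfin : C k₀ k₀ = ∑ i, (W k₀ i)^2 := by
    rw [hCdef, Matrix.mul_apply]
    exact Finset.sum_congr rfl fun i _ => by rw [Matrix.transpose_apply]; ring
  have : ∑ i, (W k₀ i)^2 = 1/2 := by rw [← hfin, hC0]
  rw [← this]
  exact Finset.sum_congr rfl fun i _ => by simp [hWdef]

lemma hadAux_norm_ones_ge {n : ℕ} [NeZero n] (p : ℝ≥0∞) [Fact (1 ≤ p)] (c : ℝ) (hc : 0 ≤ c)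
    (q : Fin n → ℝ) (hq : ∀ i, 0 ≤ q i) (hsum : c * n ≤ ∑ i, q i) :
    c * ‖(WithLp.equiv p (∀ _ : Fin n, ℝ)).symm (fun _ => (1:ℝ))‖
      ≤ ‖(WithLp.equiv p (∀ _ : Fin n, ℝ)).symm q‖ := by
  have hn : (0:ℝ) < n := by exact_mod_cast Nat.pos_of_ne_zero (NeZero.ne n)
  rcases eq_or_ne p ∞ with rfl | hp
  · have h1 : ‖(WithLp.equiv ∞ (∀ _ : Fin n, ℝ)).symm (fun _ => (1:ℝ))‖ = 1 := by
      rw [PiLp.norm_eq_ciSup]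
      simp
    have hex : ∃ i : Fin n, c ≤ q i := by
      by_contra h
      push_neg at h
      have : ∑ i, q i < ∑ _i : Fin n, c := Finset.sum_lt_sum_of_nonempty
        (Finset.univ_nonempty) (fun i _ => h i)
      rw [Finset.sum_const, card_univ, Fintype.card_fin, nsmul_eq_mul] at this
      nlinarith
    obtain ⟨i, hi⟩ := hex
    rw [h1, mul_one, PiLp.norm_eq_ciSup]
    calc c ≤ q i := hi
      _ ≤ ‖((WithLp.equiv ∞ (∀ _ : Fin n, ℝ)).symm q) i‖ := le_abs_self _
      _ ≤ ⨆ j, ‖((WithLp.equiv ∞ (∀ _ : Fin n, ℝ)).symm q) j‖ :=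
          le_ciSup (f := fun j => ‖((WithLp.equiv ∞ (∀ _ : Fin n, ℝ)).symm q) j‖)
            (Set.Finite.bddAbove (Set.finite_range _)) i
  · have hp1 : 1 ≤ p.toReal := by
      have h1 : (1:ℝ≥0∞) ≤ p := Fact.out
      rw [← ENNReal.toReal_one]
      exact ENNReal.toReal_mono hp h1
    have hpr : 0 < p.toReal := lt_of_lt_of_le one_pos hp1
    rw [PiLp.norm_eq_sum hpr, PiLp.norm_eq_sum hpr]
    simp only [WithLp.equiv_symm_apply, PiLp.toLp_apply, Real.norm_eq_abs, abs_one, Real.one_rpow,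
      Finset.sum_const, card_univ, Fintype.card_fin, nsmul_eq_mul, mul_one]
    have habs : ∀ i, |q i| ^ p.toReal = q i ^ p.toReal := fun i => by
      rw [abs_of_nonneg (hq i)]
    rw [Finset.sum_congr rfl fun i _ => habs i]
    have hjen := Real.rpow_arith_mean_le_arith_mean_rpow Finset.univ
      (fun _ : Fin n => 1 / (n:ℝ)) q (fun i _ => by positivity)
      (by rw [Finset.sum_const, card_univ, Fintype.card_fin, nsmul_eq_mul]; field_simp)
      (fun i _ => hq i) hp1
    have hkey : c ^ p.toReal * n ≤ ∑ i, q i ^ p.toReal := by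
      have h2 : (∑ i, (1 / (n:ℝ)) * q i) = (∑ i, q i) / n := by
        rw [← Finset.mul_sum]; ring
      have h3 : c ≤ (∑ i, q i) / n := by
        rw [le_div_iff₀ hn]; linarith
      have h4 : c ^ p.toReal ≤ ((∑ i, q i) / n) ^ p.toReal :=
        Real.rpow_le_rpow hc h3 hpr.le
      have h5 : (∑ i, (1 / (n:ℝ)) * q i ^ p.toReal) = (∑ i, q i ^ p.toReal) / n := by
        rw [← Finset.mul_sum]; ring
      rw [h2, h5] at hjen
      have h6 : c ^ p.toReal ≤ (∑ i, q i ^ p.toReal) / n := le_trans h4 hjen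
      calc c ^ p.toReal * n ≤ ((∑ i, q i ^ p.toReal) / n) * n :=
            mul_le_mul_of_nonneg_right h6 hn.le
        _ = ∑ i, q i ^ p.toReal := by field_simp
    calc c * (n:ℝ) ^ (1 / p.toReal)
        = (c ^ p.toReal * n) ^ (1 / p.toReal) := by
          rw [Real.mul_rpow (by positivity) hn.le, ← Real.rpow_mul hc,
            mul_one_div, div_self hpr.ne', Real.rpow_one]
      _ ≤ (∑ i, q i ^ p.toReal) ^ (1 / p.toReal) :=
          Real.rpow_le_rpow (by positivity) hkey (by positivity)

lemma hadAux_dot_diag {d : ℕ} (A : Matrix (Fin d) (Fin d) ℝ)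
    (hdiag : ∀ i j, i ≠ j → A i j = 0) (x : Fin d → ℝ) :
    dotProduct x (A *ᵥ x) = ∑ k, A k k * (x k) ^ 2 := by
  unfold dotProduct Matrix.mulVec
  refine Finset.sum_congr rfl fun k _ => ?_
  have : (dotProduct (A k) x) = A k k * x k := by
    unfold dotProduct
    rw [Finset.sum_eq_single k]
    · intro l _ hl; rw [hdiag k l (Ne.symm hl), zero_mul]
    · intro h; exact absurd (Finset.mem_univ k) h
  rw [this]; ring

end Aux

/-- For an `n × n` Hadamard matrix `H` (with all-ones first row), the Hadamard
representation is a unit-distance representation of `Kₙ` which is optimal for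
`𝓔_p(Kₙ; A)` for every diagonal `A ⪰ 0` and every `p ∈ [1,∞]`, with objective value
`(tr A / (2n)) ‖𝟙‖_p`. -/
theorem hadamardRep_optimal (m : ℕ) (H : Matrix (Fin (m + 1)) (Fin (m + 1)) ℝ)
    (hpm : ∀ i j, H i j = 1 ∨ H i j = -1)
    (hHad : Hᵀ * H = ((m + 1 : ℕ) : ℝ) • (1 : Matrix (Fin (m + 1)) (Fin (m + 1)) ℝ))
    (hones : ∀ j, H 0 j = 1)
    (p : ℝ≥0∞) [Fact (1 ≤ p)]
    (A : Matrix (Fin m) (Fin m) ℝ) (hA : A.PosSemidef)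
    (hdiag : ∀ i j, i ≠ j → A i j = 0) :
    IsUnitDistRep (SimpleGraph.completeGraph (Fin (m + 1))) (hadamardRep m H) ∧
      objP p A (hadamardRep m H)
        = sInf {r : ℝ | ∃ u : Fin (m + 1) → EuclideanSpace ℝ (Fin m),
            IsUnitDistRep (SimpleGraph.completeGraph (Fin (m + 1))) u ∧ r = objP p A u} ∧
      objP p A (hadamardRep m H)
        = A.trace / (2 * (m + 1)) *
            ‖(WithLp.equiv p (∀ _ : Fin (m + 1), ℝ)).symm (fun _ => (1 : ℝ))‖ := by
  have hN : (0:ℝ) < (m:ℝ) + 1 := by positivity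
  have h2N : (0:ℝ) < 2 * ((m:ℝ) + 1) := by positivity
  have hsq : ∀ k i, H k i ^ 2 = 1 := by
    intro k i; rcases hpm k i with h | h <;> rw [h] <;> norm_num
  have horth : ∀ i j, i ≠ j → ∑ k, H k i * H k j = 0 := by
    intro i j hij
    have := congrFun (congrFun hHad i) j
    simpa [Matrix.mul_apply, Matrix.one_apply, hij, Matrix.smul_apply] using this
  have hAkk : ∀ k, 0 ≤ A k k := fun k => by simpa using hA.diag_nonneg
  have htrA : 0 ≤ A.trace := Finset.sum_nonneg fun k _ => hAkk k
  set c : ℝ := A.trace / (2 * ((m:ℝ) + 1)) with hcdef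
  have hc : 0 ≤ c := div_nonneg htrA h2N.le
  -- step 1: unit distance representation
  have hrep : IsUnitDistRep (SimpleGraph.completeGraph (Fin (m + 1))) (hadamardRep m H) := by
    intro i j hij
    have hij' : i ≠ j := hij
    have hdiffsum : ∑ k : Fin m, (H k.succ i - H k.succ j) ^ 2 = 2 * ((m:ℝ) + 1) := by
      have hfull : ∑ k : Fin (m+1), (H k i - H k j) ^ 2 = 2 * ((m:ℝ) + 1) := by
        have : ∀ k : Fin (m+1), (H k i - H k j) ^ 2
            = H k i ^ 2 - 2 * (H k i * H k j) + H k j ^ 2 := fun k => by ring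
        rw [Finset.sum_congr rfl fun k _ => this k, Finset.sum_add_distrib,
          Finset.sum_sub_distrib, ← Finset.mul_sum, horth i j hij',
          Finset.sum_congr rfl fun k _ => hsq k i, Finset.sum_congr rfl fun k _ => hsq k j,
          Finset.sum_const]
        simp [card_univ]
        push_cast
        ring
      rw [Fin.sum_univ_succ] at hfull
      rw [hones i, hones j] at hfull
      simpa using hfull
    have heq : hadamardRep m H i - hadamardRep m H j
        = (WithLp.equiv 2 (Fin m → ℝ)).symm
          (fun k => (Real.sqrt (2 * (m + 1)))⁻¹ * (H k.succ i - H k.succ j)) := by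
      rw [hadamardRep, hadamardRep, WithLp.equiv_symm_apply, ← WithLp.toLp_sub]
      congr 1
      funext k
      simp
      try ring
    rw [heq, EuclideanSpace.norm_eq]
    have : ∀ k : Fin m,
        ‖(WithLp.equiv 2 (Fin m → ℝ)).symm
          (fun k => (Real.sqrt (2 * (m + 1)))⁻¹ * (H k.succ i - H k.succ j)) k‖ ^ 2
        = (2 * ((m:ℝ) + 1))⁻¹ * (H k.succ i - H k.succ j) ^ 2 := by
      intro k
      rw [WithLp.equiv_symm_apply, PiLp.toLp_apply, Real.norm_eq_abs, sq_abs, mul_pow, ← Real.sqrt_inv,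
        Real.sq_sqrt (by positivity)]
      try push_cast
      try ring
    rw [Finset.sum_congr rfl fun k _ => this k, ← Finset.mul_sum, hdiffsum,
      inv_mul_cancel₀ h2N.ne', Real.sqrt_one]
  refine ⟨hrep, ?_⟩
  -- objective value of the Hadamard representation
  have hobj : objP p A (hadamardRep m H)
      = c * ‖(WithLp.equiv p (∀ _ : Fin (m + 1), ℝ)).symm (fun _ => (1 : ℝ))‖ := by
    have hqc : ∀ i : Fin (m+1),
        dotProduct (WithLp.equiv 2 (Fin m → ℝ) (hadamardRep m H i))
          (A *ᵥ WithLp.equiv 2 (Fin m → ℝ) (hadamardRep m H i)) = c := by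
      intro i
      rw [hadAux_dot_diag A hdiag]
      have : ∀ k : Fin m, A k k * ((WithLp.equiv 2 (Fin m → ℝ) (hadamardRep m H i)) k) ^ 2
          = A k k * (2 * ((m:ℝ) + 1))⁻¹ := by
        intro k
        congr 1
        have : (WithLp.equiv 2 (Fin m → ℝ) (hadamardRep m H i)) k
            = (Real.sqrt (2 * (m + 1)))⁻¹ * H k.succ i := rfl
        rw [this, mul_pow, ← Real.sqrt_inv, Real.sq_sqrt (by positivity), hsq]
        push_cast
        ring
      rw [Finset.sum_congr rfl fun k _ => this k, ← Finset.sum_mul, hcdef]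
      rw [Matrix.trace]
      simp [Matrix.diag]
      field_simp
      try ring
      try tauto
    rw [objP]
    have h1 : (fun i : Fin (m+1) =>
        dotProduct (WithLp.equiv 2 (Fin m → ℝ) (hadamardRep m H i))
          (A *ᵥ WithLp.equiv 2 (Fin m → ℝ) (hadamardRep m H i))) = fun _ => c := by
      funext i; exact hqc i
    rw [h1]
    have h2 : (fun _ : Fin (m+1) => c) = c • (fun _ : Fin (m+1) => (1:ℝ)) := by
      funext i; simp
    rw [h2, WithLp.equiv_symm_apply, WithLp.toLp_smul, norm_smul, Real.norm_eq_abs, abs_of_nonneg hc]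
  -- lower bound for arbitrary representations
  have hlow : ∀ u : Fin (m + 1) → EuclideanSpace ℝ (Fin m),
      IsUnitDistRep (SimpleGraph.completeGraph (Fin (m + 1))) u →
      c * ‖(WithLp.equiv p (∀ _ : Fin (m + 1), ℝ)).symm (fun _ => (1 : ℝ))‖ ≤ objP p A u := by
    intro u hu
    set q : Fin (m+1) → ℝ := fun i =>
      dotProduct (WithLp.equiv 2 (Fin m → ℝ) (u i)) (A *ᵥ WithLp.equiv 2 (Fin m → ℝ) (u i))
      with hqdef
    have hq : ∀ i, q i = ∑ k, A k k * (u i k) ^ 2 := by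
      intro i
      rw [hqdef]
      exact hadAux_dot_diag A hdiag _
    have hqnn : ∀ i, 0 ≤ q i := by
      intro i
      rw [hq]
      exact Finset.sum_nonneg fun k _ => mul_nonneg (hAkk k) (sq_nonneg _)
    have husum : ∀ i j : Fin (m+1), i ≠ j → ∑ k, (u i k - u j k) ^ 2 = 1 := by
      intro i j hij
      have h1 : ‖u i - u j‖ = 1 := hu i j hij
      rw [EuclideanSpace.norm_eq] at h1
      have h2 := Real.sqrt_eq_one.mp h1
      rw [← h2]
      refine Finset.sum_congr rfl fun k _ => ?_
      have : (u i - u j) k = u i k - u j k := rfl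
      rw [this, Real.norm_eq_abs, sq_abs]
    have hsum : c * ((m:ℕ)+1 : ℕ) ≤ ∑ i, q i := by
      have hswap : ∑ i, q i = ∑ k, A k k * (∑ i, (u i k) ^ 2) := by
        rw [Finset.sum_congr rfl fun i _ => hq i, Finset.sum_comm]
        exact Finset.sum_congr rfl fun k _ => by rw [Finset.mul_sum]
      have hkk : ∀ k : Fin m, (1:ℝ)/2 ≤ ∑ i, (u i k) ^ 2 := by
        intro k
        have h1 := hadAux_covariance_diag u husum k
        have h2 := hadAux_centered_le (fun i => u i k) ((∑ j, u j k) / (m+1)) (by push_cast; ring_nf)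
        rw [h1] at h2
        linarith
      have : ∑ k : Fin m, A k k * (1/2 : ℝ) ≤ ∑ k, A k k * (∑ i, (u i k) ^ 2) :=
        Finset.sum_le_sum fun k _ => mul_le_mul_of_nonneg_left (hkk k) (hAkk k)
      have htr2 : ∑ k : Fin m, A k k * (1/2 : ℝ) = A.trace / 2 := by
        rw [← Finset.sum_mul, Matrix.trace]
        simp [Matrix.diag]
        ring
      have hcn : c * ((m:ℕ)+1 : ℕ) = A.trace / 2 := by
        rw [hcdef]
        push_cast
        field_simp
        try ring
      rw [hcn, hswap]
      linarith
    have := hadAux_norm_ones_ge p c hc q hqnn (by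
      have : ((m+1 : ℕ) : ℝ) = (m:ℝ) + 1 := by push_cast; ring
      rw [this] at hsum ⊢
      convert hsum using 2 <;> push_cast <;> ring)
    rw [objP]
    exact this
  -- assemble
  constructor
  · have hIsLeast : IsLeast {r : ℝ | ∃ u : Fin (m + 1) → EuclideanSpace ℝ (Fin m),
        IsUnitDistRep (SimpleGraph.completeGraph (Fin (m + 1))) u ∧ r = objP p A u}
        (objP p A (hadamardRep m H)) := by
      constructor
      · exact ⟨hadamardRep m H, hrep, rfl⟩
      · rintro r ⟨u, hu, rfl⟩
        rw [hobj]
        exact hlow u hu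
    exact (hIsLeast.csInf_eq).symm
  · exact hobj
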